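/- Let p_1, ..., p_k be distinct primes, and for integers e_1, ..., e_k define φ(e_1,...,e_k) = e_1·√p_1 + ... + e_k·√p_k ∈ ℝ. Then φ is an injective group homomorphism from ℤ^k to (ℝ, +); in particular φ(e) = 0 iff e = 0. -/

import Mathlib

open Real

noncomputable def Kf (L : List ℕ) : Subfield ℝ :=
  Subfield.closure {x | ∃ q ∈ L, x = Real.sqrt q}

lemma Kf_mono {L : List ℕ} {q : ℕ} : Kf L ≤ Kf (q :: L) := by
  apply Subfield.closure_mono
  rintro x ⟨r, hr, rfl⟩
  exact ⟨r, List.mem_cons_of_mem _ hr, rfl⟩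

lemma sqrt_mem_Kf {L : List ℕ} {q : ℕ} (h : q ∈ L) : Real.sqrt q ∈ Kf L :=
  Subfield.subset_closure ⟨q, h, rfl⟩

/-- Decomposition of elements of `Kf (q :: L)` as `a + b * √q`. -/
noncomputable def adjS (F : Subfield ℝ) (q : ℕ) (hq : Real.sqrt q ∉ F) : Subfield ℝ where
  carrier := {x | ∃ a ∈ F, ∃ b ∈ F, x = a + b * Real.sqrt q}
  one_mem' := ⟨1, one_mem _, 0, zero_mem _, by ring⟩
  zero_mem' := ⟨0, zero_mem _, 0, zero_mem _, by ring⟩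
  add_mem' := by
    rintro x y ⟨a, ha, b, hb, rfl⟩ ⟨c, hc, d, hd, rfl⟩
    exact ⟨a + c, add_mem ha hc, b + d, add_mem hb hd, by ring⟩
  neg_mem' := by
    rintro x ⟨a, ha, b, hb, rfl⟩
    exact ⟨-a, neg_mem ha, -b, neg_mem hb, by ring⟩
  mul_mem' := by
    rintro x y ⟨a, ha, b, hb, rfl⟩ ⟨c, hc, d, hd, rfl⟩
    have hq2 : (Real.sqrt q) * (Real.sqrt q) = (q : ℝ) :=
      Real.mul_self_sqrt (by positivity)
    refine ⟨a * c + b * d * q, ?_, a * d + b * c, ?_, ?_⟩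
    · exact add_mem (mul_mem ha hc) (mul_mem (mul_mem hb hd) (natCast_mem _ q))
    · exact add_mem (mul_mem ha hd) (mul_mem hb hc)
    · linear_combination (b * d) * hq2
  inv_mem' := by
    rintro x ⟨a, ha, b, hb, rfl⟩
    have hq2 : (Real.sqrt q) * (Real.sqrt q) = (q : ℝ) :=
      Real.mul_self_sqrt (by positivity)
    by_cases hx0 : a + b * Real.sqrt q = 0
    · rw [hx0]
      exact ⟨0, zero_mem _, 0, zero_mem _, by simp⟩
    · have hD : a ^ 2 - (q : ℝ) * b ^ 2 ≠ 0 := by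
        intro hD
        by_cases hb0 : b = 0
        · apply hx0
          rw [hb0] at hD ⊢
          have : a = 0 := by nlinarith [hD]
          simp [this]
        · have hsq : (a / b) ^ 2 = (Real.sqrt q) ^ 2 := by
            have hq2' : (Real.sqrt q) ^ 2 = (q : ℝ) := by rw [sq, hq2]
            rw [hq2']; field_simp; linear_combination hD
          have hfac : (a / b - Real.sqrt q) * (a / b + Real.sqrt q) = 0 := by
            linear_combination hsq
          rcases mul_eq_zero.mp hfac with h | h
          · exact hq (by
              have : Real.sqrt q = a / b := by linarith
              rw [this]; exact div_mem ha hb)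
          · exact hq (by
              have : Real.sqrt q = -(a / b) := by linarith
              rw [this]; exact neg_mem (div_mem ha hb))
      have hDF : a ^ 2 - (q : ℝ) * b ^ 2 ∈ F :=
        sub_mem (pow_mem ha 2) (mul_mem (natCast_mem _ q) (pow_mem hb 2))
      have hmul : (a + b * Real.sqrt q) * (a - b * Real.sqrt q)
          = a ^ 2 - (q : ℝ) * b ^ 2 := by
        linear_combination (-(b ^ 2)) * hq2
      refine ⟨a / (a ^ 2 - (q : ℝ) * b ^ 2), div_mem ha hDF,
        -b / (a ^ 2 - (q : ℝ) * b ^ 2), div_mem (neg_mem hb) hDF, ?_⟩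
      refine inv_eq_of_mul_eq_one_right ?_
      have hrepr : a / (a ^ 2 - (q : ℝ) * b ^ 2)
          + -b / (a ^ 2 - (q : ℝ) * b ^ 2) * Real.sqrt q
          = (a - b * Real.sqrt q) / (a ^ 2 - (q : ℝ) * b ^ 2) := by ring
      rw [hrepr, ← mul_div_assoc, div_eq_one_iff_eq hD]
      exact hmul

/-- Decomposition of elements of `Kf (q :: L)` as `a + b * √q`. -/
lemma Kf_cons_decomp {L : List ℕ} {q : ℕ} (hq : Real.sqrt q ∉ Kf L)
    {x : ℝ} (hx : x ∈ Kf (q :: L)) :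
    ∃ a ∈ Kf L, ∃ b ∈ Kf L, x = a + b * Real.sqrt q := by
  have hle : Kf (q :: L) ≤ adjS (Kf L) q hq := by
    apply Subfield.closure_le.mpr
    rintro x ⟨r, hr, rfl⟩
    rcases List.mem_cons.mp hr with h | h
    · exact ⟨0, zero_mem _, 1, one_mem _, by rw [h]; ring⟩
    · exact ⟨Real.sqrt r, sqrt_mem_Kf h, 0, zero_mem _, by ring⟩
  exact hle hx

theorem sqrt_notMem_Kf : ∀ (L : List ℕ), (∀ q ∈ L, Nat.Prime q) → L.Nodup →
    ∀ d : ℕ, Squarefree d → 1 < d → (∀ q ∈ L, ¬ q ∣ d) → Real.sqrt d ∉ Kf L := by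
  intro L
  induction L with
  | nil =>
    intro _ _ d hsf hd _ hmem
    have hirr : Irrational (Real.sqrt d) := by
      rw [irrational_sqrt_natCast_iff]
      rintro ⟨r, hr⟩
      have hu := hsf r (by rw [hr])
      rw [Nat.isUnit_iff] at hu
      subst hu
      omega
    -- Kf [] = ⊥ ≤ fieldRange of ratCast
    have : Kf ([] : List ℕ) = ⊥ := by
      unfold Kf
      convert Subfield.closure_empty
      simp
    rw [this] at hmem
    have : Real.sqrt d ∈ (Rat.castHom ℝ).fieldRange :=
      (bot_le : (⊥ : Subfield ℝ) ≤ (Rat.castHom ℝ).fieldRange) hmem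
    rcases RingHom.mem_fieldRange.mp this with ⟨r, hr⟩
    exact hirr ⟨r, hr⟩
  | cons q L ih =>
    intro hprime hnodup d hsf hd hcop hmem
    have hqprime : q.Prime := hprime q List.mem_cons_self
    have hnodup' : L.Nodup := hnodup.of_cons
    have hqnotL : q ∉ L := by
      intro h; exact (List.nodup_cons.mp hnodup).1 h
    have hprime' : ∀ r ∈ L, Nat.Prime r := fun r hr => hprime r (List.mem_cons_of_mem _ hr)
    have hLndvdq : ∀ r ∈ L, ¬ r ∣ q := by
      intro r hr hdvd
      have := (Nat.prime_dvd_prime_iff_eq (hprime' r hr) hqprime).mp hdvd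
      exact hqnotL (this ▸ hr)
    have hsq : Real.sqrt q ∉ Kf L :=
      ih hprime' hnodup' q hqprime.squarefree hqprime.one_lt hLndvdq
    obtain ⟨a, ha, b, hb, hab⟩ := Kf_cons_decomp hsq hmem
    have hq2 : (Real.sqrt q) * (Real.sqrt q) = (q : ℝ) :=
      Real.mul_self_sqrt (by positivity)
    have hd2 : (Real.sqrt d) * (Real.sqrt d) = (d : ℝ) :=
      Real.mul_self_sqrt (by positivity)
    have hkey : (d : ℝ) = a ^ 2 + b ^ 2 * q + 2 * a * b * Real.sqrt q := by
      have h1 := congrArg (fun x => x * x) hab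
      rw [hd2] at h1
      linear_combination h1 + b ^ 2 * hq2
    by_cases hb0 : b = 0
    · -- √d ∈ Kf L, contradiction with ih
      apply ih hprime' hnodup' d hsf hd
        (fun r hr => hcop r (List.mem_cons_of_mem _ hr))
      rw [hab, hb0]; simpa using ha
    by_cases ha0 : a = 0
    · -- √(d*q) = b * q ∈ Kf L
      have hqd : ¬ q ∣ d := hcop q List.mem_cons_self
      have hcopdq : Nat.Coprime d q := ((Nat.Prime.coprime_iff_not_dvd hqprime).mpr hqd).symm
      have hsfdq : Squarefree (d * q) :=
        (Nat.squarefree_mul hcopdq).mpr ⟨hsf, hqprime.squarefree⟩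
      apply ih hprime' hnodup' (d * q) hsfdq
        (by nlinarith [hqprime.one_lt])
        (by
          intro r hr hdvd
          rcases (Nat.Prime.dvd_mul (hprime' r hr)).mp hdvd with h | h
          · exact hcop r (List.mem_cons_of_mem _ hr) h
          · exact hLndvdq r hr h)
      have hsdq : Real.sqrt ((d * q : ℕ) : ℝ) = b * q := by
        rw [show ((d * q : ℕ) : ℝ) = (d : ℝ) * (q : ℝ) by push_cast; ring,
          Real.sqrt_mul (by positivity), hab, ha0]
        linear_combination b * hq2
      rw [hsdq]
      exact mul_mem hb (natCast_mem _ q)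
    · -- √q ∈ Kf L
      apply hsq
      have : Real.sqrt q = ((d : ℝ) - a ^ 2 - b ^ 2 * q) / (2 * a * b) := by
        field_simp
        nlinarith [hkey]
      rw [this]
      refine div_mem (sub_mem (sub_mem (natCast_mem _ d) (pow_mem ha 2))
        (mul_mem (pow_mem hb 2) (natCast_mem _ q))) ?_
      have h2 : (2 : ℝ) ∈ Kf L := by exact_mod_cast natCast_mem (Kf L) 2
      exact mul_mem (mul_mem h2 ha) hb

theorem real_counter_faithful
    (k : ℕ) (p : Fin k → ℕ) (hp : ∀ i, (p i).Prime)
    (hinj : Function.Injective p) :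
    let φ : (Fin k → ℤ) → ℝ := fun e => ∑ i, (e i : ℝ) * Real.sqrt (p i)
    Function.Injective φ ∧
    (∀ e f : Fin k → ℤ, φ (e + f) = φ e + φ f) ∧
    (∀ e : Fin k → ℤ, φ e = 0 ↔ e = 0) := by
  intro φ
  have hzero : ∀ e : Fin k → ℤ, φ e = 0 → e = 0 := by
    intro e he
    by_contra hne
    obtain ⟨j, hj⟩ : ∃ j, e j ≠ 0 := by
      by_contra h
      push_neg at h
      exact hne (funext h)
    set L : List ℕ := (Finset.univ.erase j).toList.map p with hL
    have hmemL : ∀ i : Fin k, i ≠ j → p i ∈ L := by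
      intro i hi
      simp only [hL, List.mem_map, Finset.mem_toList, Finset.mem_erase]
      exact ⟨i, ⟨hi, Finset.mem_univ i⟩, rfl⟩
    have hLprime : ∀ q ∈ L, Nat.Prime q := by
      intro q hq
      simp only [hL, List.mem_map] at hq
      obtain ⟨i, _, rfl⟩ := hq
      exact hp i
    have hLnodup : L.Nodup := by
      exact (Finset.nodup_toList _).map hinj
    have hLcop : ∀ q ∈ L, ¬ q ∣ p j := by
      intro q hq hdvd
      simp only [hL, List.mem_map, Finset.mem_toList, Finset.mem_erase] at hq
      obtain ⟨i, ⟨hij, _⟩, rfl⟩ := hq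
      have := (Nat.prime_dvd_prime_iff_eq (hp i) (hp j)).mp hdvd
      exact hij (hinj this)
    apply sqrt_notMem_Kf L hLprime hLnodup (p j) (hp j).squarefree (hp j).one_lt hLcop
    -- √(p j) = (∑ i in erase, e i √(p i)) / (-e j)
    have hsum : ∑ i ∈ Finset.univ.erase j, (e i : ℝ) * Real.sqrt (p i)
        = - ((e j : ℝ) * Real.sqrt (p j)) := by
      have h1 := Finset.add_sum_erase Finset.univ (fun i => (e i : ℝ) * Real.sqrt (p i))
        (Finset.mem_univ j)
      have he' : ∑ i, (e i : ℝ) * Real.sqrt (p i) = 0 := he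
      rw [he'] at h1
      linarith [h1]
    have hej : (e j : ℝ) ≠ 0 := Int.cast_ne_zero.mpr hj
    have : Real.sqrt (p j) = (∑ i ∈ Finset.univ.erase j, (e i : ℝ) * Real.sqrt (p i)) / (-(e j)) := by
      rw [hsum]
      field_simp
    rw [this]
    refine div_mem ?_ (neg_mem (intCast_mem _ (e j)))
    apply sum_mem
    intro i hi
    have hij : i ≠ j := (Finset.mem_erase.mp hi).1
    exact mul_mem (intCast_mem _ (e i)) (sqrt_mem_Kf (hmemL i hij))
  have hadd : ∀ e f : Fin k → ℤ, φ (e + f) = φ e + φ f := by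
    intro e f
    simp only [φ, Pi.add_apply]
    rw [← Finset.sum_add_distrib]
    congr 1
    funext i
    push_cast
    ring
  refine ⟨?_, hadd, ?_⟩
  · intro e f hef
    have : φ (e - f) = 0 := by
      simp only [φ, Pi.sub_apply] at *
      rw [← sub_eq_zero] at hef
      rw [← hef, ← Finset.sum_sub_distrib]
      congr 1
      funext i
      push_cast
      ring
    have := hzero _ this
    funext i
    have := congrFun this i
    simpa [sub_eq_zero] using this
  · intro e
    constructor
    · exact hzero e
    · rintro rfl
      simp [φ]
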